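/- Let F be a field of characteristic 2, let (A,σ) be a central simple algebra with orthogonal involution over F, and let τ be an orthogonal involution on M₂(F). If (A ⊗_F M₂(F), σ ⊗ τ) is isomorphic, as an F-algebra with involution, to (M_{2ⁿ}(F), t) with t the transpose involution, then (A,σ) is isomorphic, as an F-algebra with involution, to (M_{2^{n−1}}(F), t). -/

import Mathlib

open scoped TensorProduct Matrix

section AlgDefs
variable (F : Type*) [Field F] {A : Type*} [Ring A] [Algebra F A]

/-- The set `Alt(A,σ) = {σ x - x : x ∈ A}` of alternating elements. -/
def AltSet (σ : A →ₗ[F] A) : Set A := Set.range fun x => σ x - x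

/-- `σ` is an `F`-linear involution (anti-automorphism of order two) of the first kind. -/
def IsInvolutionOn (σ : A →ₗ[F] A) : Prop :=
  (∀ x y : A, σ (x * y) = σ y * σ x) ∧ ∀ x : A, σ (σ x) = x

/-- `σ` is an orthogonal involution: an involution with `1 ∉ Alt(A,σ)`. -/
def IsOrthInvolution (σ : A →ₗ[F] A) : Prop :=
  IsInvolutionOn F σ ∧ (1 : A) ∉ AltSet F σ

/-- `Sym(A,σ)⁺ = {x ∈ Sym(A,σ) : x² ∈ F·1}`. -/
def SymPlus (σ : A →ₗ[F] A) : Set A :=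
  {x | σ x = x ∧ ∃ α : F, x ^ 2 = algebraMap F A α}

/-- `Alt(A,σ)⁺ = {x ∈ Alt(A,σ) : x² ∈ F·1}`. -/
def AltPlus (σ : A →ₗ[F] A) : Set A :=
  {x | x ∈ AltSet F σ ∧ ∃ α : F, x ^ 2 = algebraMap F A α}

/-- `σ` is isotropic: `σ(x)·x = 0` for some nonzero `x`. -/
def IsIsotropicInv (σ : A →ₗ[F] A) : Prop := ∃ x : A, x ≠ 0 ∧ σ x * x = 0

/-- An `F`-subalgebra of `A` which is central simple over `F`. -/
def IsCentralSimpleSub (Q : Subalgebra F A) : Prop :=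
  (∀ z ∈ Q, (∀ y ∈ Q, z * y = y * z) → ∃ α : F, z = algebraMap F A α) ∧
    IsSimpleRing Q

/-- A `σ`-invariant quaternion subalgebra of `A`: a `4`-dimensional central simple
`F`-subalgebra stable under `σ`. -/
def IsQuatSub (σ : A →ₗ[F] A) (Q : Subalgebra F A) : Prop :=
  Module.finrank F Q = 4 ∧ IsCentralSimpleSub F Q ∧ ∀ x ∈ Q, σ x ∈ Q

/-- `(A, σ)` is totally decomposable with `n` quaternion factors: `A` carries `n`
pairwise commuting `σ`-invariant quaternion subalgebras generating `A`, with
`dim_F A = 4 ^ n` (equivalently, `(A,σ)` is isomorphic to the tensor product of the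
quaternion algebras with involution `(Qᵢ, σ|_{Qᵢ})`); then `deg_F A = 2 ^ n`. -/
def IsTotDec (σ : A →ₗ[F] A) (n : ℕ) : Prop :=
  Module.finrank F A = 4 ^ n ∧
    ∃ Q : Fin n → Subalgebra F A,
      (∀ i, IsQuatSub F σ (Q i)) ∧
      (∀ i j, i ≠ j → ∀ x ∈ Q i, ∀ y ∈ Q j, x * y = y * x) ∧
      iSup Q = ⊤

/-- `S` is an inseparable subalgebra of `(A, σ)`, `A` of degree `2 ^ n`:
a (unital, commutative) subalgebra contained in `Sym(A,σ)⁺`, of dimension `2 ^ n`,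
self-centralizing, and generated by `n` elements. -/
def IsInsepSub (σ : A →ₗ[F] A) (n : ℕ) (S : Subalgebra F A) : Prop :=
  (S : Set A) ⊆ SymPlus F σ ∧
  Module.finrank F S = 2 ^ n ∧
  Subalgebra.centralizer F (S : Set A) = S ∧
  ∃ g : Fin n → A, Algebra.adjoin F (Set.range g) = S

end AlgDefs


set_option linter.unusedSectionVars false
set_option maxHeartbeats 1600000

open Matrix

section Helpers

variable {F : Type*} [Field F] [CharP F 2]

lemma char2_add_self {V : Type*} [AddCommGroup V] [Module F V] (x : V) : x + x = 0 := by
  have h2 : (2 : F) = 0 := by exact_mod_cast CharP.cast_eq_zero F 2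
  have := two_smul F x
  rw [h2, zero_smul] at this
  exact this.symm

lemma char2_sub_eq_add {V : Type*} [AddCommGroup V] [Module F V] (x y : V) : x - y = x + y := by
  rw [sub_eq_add_neg, neg_eq_of_add_eq_zero_left (char2_add_self (F := F) y)]

lemma inv_one_eq_one {A : Type*} [Ring A] [Algebra F A] (σ : A →ₗ[F] A)
    (hσ : IsInvolutionOn F σ) : σ 1 = 1 := by
  have h := hσ.1 (σ 1) 1
  rw [mul_one, hσ.2] at h
  simpa using h.symm

end Helpers

section VMV

variable {F : Type*} [CommRing F] {ι : Type*} [Fintype ι]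

lemma vmv_mul (u z : ι → F) (M : Matrix ι ι F) :
    vecMulVec u z * M = vecMulVec u (Mᵀ *ᵥ z) := by
  ext i j
  simp only [mul_apply, vecMulVec_apply, mulVec, dotProduct, transpose_apply, Finset.mul_sum]
  exact Finset.sum_congr rfl fun k _ => by ring

lemma mul_vmv (u z : ι → F) (M : Matrix ι ι F) :
    M * vecMulVec u z = vecMulVec (M *ᵥ u) z := by
  ext i j
  simp only [mul_apply, vecMulVec_apply, mulVec, dotProduct, Finset.sum_mul]
  exact Finset.sum_congr rfl fun k _ => by ring

lemma vmv_vmv (u z u' z' : ι → F) :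
    vecMulVec u z * vecMulVec u' z' = (z ⬝ᵥ u') • vecMulVec u z' := by
  ext i j
  simp only [mul_apply, vecMulVec_apply, Matrix.smul_apply, dotProduct, smul_eq_mul, Finset.sum_mul]
  exact Finset.sum_congr rfl fun k _ => by ring

lemma vmv_mulVec (u z w : ι → F) :
    vecMulVec u z *ᵥ w = (z ⬝ᵥ w) • u := by
  ext i
  simp only [mulVec, dotProduct, vecMulVec_apply, Pi.smul_apply, smul_eq_mul, Finset.sum_mul]
  exact Finset.sum_congr rfl fun k _ => by ring

lemma vmv_transpose (u z : ι → F) : (vecMulVec u z)ᵀ = vecMulVec z u := by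
  ext i j
  simp [vecMulVec_apply, mul_comm]

end VMV

section Tau

variable {F : Type*} [Field F] [CharP F 2]

local notation "M₂" => Matrix (Fin 2) (Fin 2) F

/-- From an orthogonal involution `τ` on `M₂(F)` one obtains a `τ`-symmetric rank-one
idempotent. -/
lemma exists_symm_idem (τ : M₂ →ₗ[F] M₂) (hτ : IsOrthInvolution F τ) :
    ∃ e : M₂, e * e = e ∧ τ e = e ∧ e ≠ 0 ∧ (∀ m : M₂, ∃ s : F, e * m * e = s • e) := by
  obtain ⟨⟨τmul, τinv⟩, τorth⟩ := hτ
  have τinj : Function.Injective τ := Function.LeftInverse.injective τinv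
  set σT : M₂ →ₗ[F] M₂ :=
    { toFun := fun m => mᵀ
      map_add' := fun a b => transpose_add a b
      map_smul' := fun c a => transpose_smul c a } with hσT
  set g₂ : M₂ →ₗ[F] M₂ := τ.comp σT with hg₂
  have hg₂app : ∀ x : M₂, g₂ x = τ xᵀ := fun _ => rfl
  have gmul : ∀ x y : M₂, g₂ (x * y) = g₂ x * g₂ y := by
    intro x y
    simp only [hg₂app, transpose_mul, τmul]
  have ginj : Function.Injective g₂ := by
    intro x y h
    rw [hg₂app, hg₂app] at h
    exact transpose_injective (τinj h)
  have hEne : (Matrix.single 0 0 1 : M₂) ≠ 0 := by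
    intro h
    have := congrFun (congrFun h 0) 0
    simp at this
  have ha00ne : g₂ (Matrix.single 0 0 1) ≠ 0 := by
    intro h
    exact hEne (by simpa using ginj (h.trans (map_zero g₂).symm))
  have hx₀ : ∃ x₀, g₂ (Matrix.single 0 0 1) *ᵥ x₀ ≠ 0 := by
    by_contra hc
    push_neg at hc
    apply ha00ne
    ext i j
    have := congrFun (hc (Pi.single j 1)) i
    rw [mulVec_single] at this
    simpa using this
  obtain ⟨x₀, hx₀⟩ := hx₀
  set v₁ : Fin 2 → F := g₂ (Matrix.single 0 0 1) *ᵥ x₀ with hv₁def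
  have hv₁ne : v₁ ≠ 0 := hx₀
  set v₂ : Fin 2 → F := g₂ (Matrix.single 1 0 1) *ᵥ v₁ with hv₂def
  have prod : ∀ (k l k' l' : Fin 2) (x : Fin 2 → F),
      g₂ (Matrix.single k l 1) *ᵥ (g₂ (Matrix.single k' l' 1) *ᵥ x)
        = g₂ (Matrix.single k l 1 * Matrix.single k' l' 1) *ᵥ x := by
    intro k l k' l' x
    rw [mulVec_mulVec, gmul]
  have f00v1 : g₂ (Matrix.single 0 0 1) *ᵥ v₁ = v₁ := by
    rw [hv₁def, prod]; simp
  have hprod_ne : ∀ (k l k' l' : Fin 2), l ≠ k' →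
      Matrix.single k l (1 : F) * Matrix.single k' l' (1 : F) = 0 := by
    intro k l k' l' h
    ext a b
    simp only [mul_apply, Matrix.single, of_apply, Matrix.zero_apply, boole_mul, ite_and]
    rw [Finset.sum_eq_zero]
    intro x _
    by_cases h1 : k = a
    · by_cases h2 : l = x
      · subst h2
        simp [Ne.symm h]
      · simp [h2]
    · simp [h1]
  have hprod_eq : ∀ (k l l' : Fin 2),
      Matrix.single k l (1 : F) * Matrix.single l l' (1 : F)
        = Matrix.single k l' (1 : F) := by
    intro k l l'
    rw [Matrix.single_mul_single_same, one_mul]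
  have f00v2 : g₂ (Matrix.single 0 0 1) *ᵥ v₂ = 0 := by
    rw [hv₂def, prod, hprod_ne 0 0 1 0 (by decide), map_zero, zero_mulVec]
  have f10v1 : g₂ (Matrix.single 1 0 1) *ᵥ v₁ = v₂ := rfl
  have f10v2 : g₂ (Matrix.single 1 0 1) *ᵥ v₂ = 0 := by
    rw [hv₂def, prod, hprod_ne 1 0 1 0 (by decide), map_zero, zero_mulVec]
  have f01v1 : g₂ (Matrix.single 0 1 1) *ᵥ v₁ = 0 := by
    conv_lhs => rw [hv₁def]
    rw [prod, hprod_ne 0 1 0 0 (by decide), map_zero, zero_mulVec]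
  have f01v2 : g₂ (Matrix.single 0 1 1) *ᵥ v₂ = v₁ := by
    rw [hv₂def, prod, hprod_eq 0 1 0, f00v1]
  have f11v1 : g₂ (Matrix.single 1 1 1) *ᵥ v₁ = 0 := by
    conv_lhs => rw [hv₁def]
    rw [prod, hprod_ne 1 1 0 0 (by decide), map_zero, zero_mulVec]
  have f11v2 : g₂ (Matrix.single 1 1 1) *ᵥ v₂ = v₂ := by
    rw [hv₂def, prod, hprod_eq 1 1 0]
  have hv₂ne : v₂ ≠ 0 := by
    intro h
    rw [h] at f01v2
    simp at f01v2
    exact hv₁ne f01v2.symm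
  -- the matrix q with columns v₁, v₂
  set q : M₂ := Matrix.of (fun i j => ![v₁, v₂] j i) with hqdef
  have mulq_apply : ∀ (M : M₂) (i j : Fin 2), (M * q) i j = (M *ᵥ ![v₁, v₂] j) i := by
    intro M i j
    simp only [mul_apply, mulVec, dotProduct, hqdef, Matrix.of_apply]
  have hq0 : ∀ i, q i 0 = v₁ i := fun i => rfl
  have hq1 : ∀ i, q i 1 = v₂ i := fun i => rfl
  have hj2 : ∀ j : Fin 2, j = 0 ∨ j = 1 := by decide
  have qmulE' : ∀ (k l i j : Fin 2), (q * Matrix.single k l (1 : F)) i j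
      = if l = j then ![v₁, v₂] k i else 0 := by
    intro k l i j
    by_cases h : l = j
    · subst h
      rw [if_pos rfl, Matrix.mul_single_apply_same, mul_one]
      rfl
    · rw [if_neg h, Matrix.mul_single_apply_of_ne (hbj := fun hh => h hh.symm)]
  have HqE : ∀ k l : Fin 2, g₂ (Matrix.single k l 1) * q = q * Matrix.single k l 1 := by
    intro k l
    ext i j
    rw [mulq_apply, qmulE']
    rcases hj2 k with rfl | rfl <;> rcases hj2 l with rfl | rfl <;>
        rcases hj2 j with rfl | rfl <;>
      simp [f00v1, f00v2, f10v1, f10v2, f01v1, f01v2, f11v1, f11v2]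
  have Hq : ∀ x : M₂, g₂ x * q = q * x := by
    intro x
    have hsm : ∀ (k l : Fin 2), Matrix.single k l (x k l)
        = x k l • Matrix.single k l (1 : F) := by
      intro k l
      rw [smul_single]
      norm_num
    have hx : x = ∑ k : Fin 2, ∑ l : Fin 2, x k l • Matrix.single k l (1 : F) := by
      conv_lhs => rw [matrix_eq_sum_single x]
      exact Finset.sum_congr rfl fun k _ => Finset.sum_congr rfl fun l _ => hsm k l
    calc g₂ x * q
        = (∑ k : Fin 2, ∑ l : Fin 2, x k l • g₂ (Matrix.single k l 1)) * q := by
          conv_lhs => rw [hx]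
          rw [map_sum]
          congr 1
          refine Finset.sum_congr rfl fun k _ => ?_
          rw [map_sum]
          exact Finset.sum_congr rfl fun l _ => map_smul g₂ _ _
      _ = ∑ k : Fin 2, ∑ l : Fin 2, x k l • (g₂ (Matrix.single k l 1) * q) := by
          rw [Finset.sum_mul]
          refine Finset.sum_congr rfl fun k _ => ?_
          rw [Finset.sum_mul]
          exact Finset.sum_congr rfl fun l _ => smul_mul_assoc _ _ _
      _ = ∑ k : Fin 2, ∑ l : Fin 2, x k l • (q * Matrix.single k l 1) := by
          refine Finset.sum_congr rfl fun k _ => Finset.sum_congr rfl fun l _ => ?_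
          rw [HqE]
      _ = q * x := by
          conv_rhs => rw [hx]
          rw [Finset.mul_sum]
          refine Finset.sum_congr rfl fun k _ => ?_
          rw [Finset.mul_sum]
          exact Finset.sum_congr rfl fun l _ => (mul_smul_comm _ _ _).symm
  -- determinant of q is nonzero
  have hdet0 : v₁ 0 * v₂ 1 - v₂ 0 * v₁ 1 ≠ 0 := by
    intro hd
    have hv1cases : v₁ 0 ≠ 0 ∨ v₁ 1 ≠ 0 := by
      by_contra hcon
      push_neg at hcon
      apply hv₁ne
      funext m
      rcases hj2 m with rfl | rfl
      · exact hcon.1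
      · exact hcon.2
    have hkey : ∃ c : F, v₂ = c • v₁ := by
      rcases hv1cases with hk | hk
      · refine ⟨v₂ 0 / v₁ 0, funext fun m => ?_⟩
        rcases hj2 m with rfl | rfl <;>
          simp only [Pi.smul_apply, smul_eq_mul]
        · rw [div_mul_cancel₀ _ hk]
        · rw [div_mul_eq_mul_div, eq_div_iff hk]
          linear_combination hd
      · refine ⟨v₂ 1 / v₁ 1, funext fun m => ?_⟩
        rcases hj2 m with rfl | rfl <;>
          simp only [Pi.smul_apply, smul_eq_mul]
        · rw [div_mul_eq_mul_div, eq_div_iff hk]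
          linear_combination -hd
        · rw [div_mul_cancel₀ _ hk]
    obtain ⟨c, hc⟩ := hkey
    apply hv₁ne
    have h := f01v2
    rw [hc, mulVec_smul, f01v1, smul_zero] at h
    exact h.symm
  have hdetq : q.det ≠ 0 := by
    rw [det_fin_two]
    exact hdet0
  have hqunit : IsUnit q.det := isUnit_iff_ne_zero.2 hdetq
  have hqq' : q * q⁻¹ = 1 := mul_nonsing_inv q hqunit
  have hq'q : q⁻¹ * q = 1 := nonsing_inv_mul q hqunit
  have Hτ : ∀ y : M₂, τ y * q = q * yᵀ := by
    intro y
    have h := Hq yᵀ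
    rw [hg₂app, transpose_transpose] at h
    exact h
  have τform : ∀ y : M₂, τ y = q * yᵀ * q⁻¹ := by
    intro y
    calc τ y = τ y * (q * q⁻¹) := by rw [hqq', mul_one]
    _ = (τ y * q) * q⁻¹ := by rw [mul_assoc]
    _ = q * yᵀ * q⁻¹ := by rw [Hτ]
  -- q is symmetric
  have h3 : qᵀ * q⁻¹ᵀ = 1 := by rw [← transpose_mul, hq'q, transpose_one]
  have hcomm : ∀ y : M₂, y * (q * q⁻¹ᵀ) = (q * q⁻¹ᵀ) * y := by
    intro y
    have h := Hτ (τ y)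
    rw [τinv] at h
    rw [τform y, transpose_mul, transpose_mul, transpose_transpose] at h
    -- h : y * q = q * (q⁻¹ᵀ * (y * qᵀ))  (up to associativity)
    calc y * (q * q⁻¹ᵀ) = (y * q) * q⁻¹ᵀ := by rw [mul_assoc]
    _ = (q * (q⁻¹ᵀ * (y * qᵀ))) * q⁻¹ᵀ := by rw [h]
    _ = (q * q⁻¹ᵀ) * y := by
        simp only [mul_assoc]
        rw [h3, mul_one]
  have hc10 : (q * q⁻¹ᵀ) 1 0 = 0 := by
    have h := congrFun (congrFun (hcomm (Matrix.single 0 1 1)) 0) 0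
    simpa using h
  have hc01 : (q * q⁻¹ᵀ) 0 1 = 0 := by
    have h := congrFun (congrFun (hcomm (Matrix.single 1 0 1)) 1) 1
    simpa using h
  have hc0011 : (q * q⁻¹ᵀ) 1 1 = (q * q⁻¹ᵀ) 0 0 := by
    have h := congrFun (congrFun (hcomm (Matrix.single 0 1 1)) 0) 1
    simpa using h
  set α : F := (q * q⁻¹ᵀ) 0 0 with hα
  have hcm1 : q * q⁻¹ᵀ = α • (1 : M₂) := by
    ext i j
    rcases hj2 i with rfl | rfl <;> rcases hj2 j with rfl | rfl <;>
      simp [hc10, hc01, hc0011, ← hα, Matrix.one_apply, Matrix.smul_apply]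
  have hq_eq : q = α • qᵀ := by
    calc q = q * (q⁻¹ᵀ * qᵀ) := by
          rw [← transpose_mul, hqq', transpose_one, mul_one]
    _ = (q * q⁻¹ᵀ) * qᵀ := by rw [mul_assoc]
    _ = (α • (1 : M₂)) * qᵀ := by rw [hcm1]
    _ = α • qᵀ := by rw [smul_mul_assoc, one_mul]
  have hqne : q ≠ 0 := by
    intro h
    apply hv₁ne
    funext i
    exact congrFun (congrFun h i) 0
  have hqT2 : qᵀ = α • q := by
    calc qᵀ = (α • qᵀ)ᵀ := by rw [← hq_eq]
    _ = α • q := by rw [transpose_smul, transpose_transpose]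
  have hαα : α * α = 1 := by
    have h : q = (α * α) • q := by
      calc q = α • qᵀ := hq_eq
      _ = α • (α • q) := by rw [hqT2]
      _ = (α * α) • q := by rw [smul_smul]
    have h2 : (α * α - 1) • q = 0 := by
      rw [sub_smul, one_smul, ← h, sub_self]
    rcases smul_eq_zero.1 h2 with h3 | h3
    · exact sub_eq_zero.1 h3
    · exact absurd h3 hqne
  have h2F : (2 : F) = 0 := by exact_mod_cast CharP.cast_eq_zero F 2
  have hα1 : α = 1 := by
    have hs : (α + 1) * (α + 1) = 0 := by linear_combination hαα + (α + 1) * h2F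
    have hadd := mul_self_eq_zero.1 hs
    have hne : α = -1 := eq_neg_of_add_eq_zero_left hadd
    rw [hne]
    linear_combination -h2F
  have hqT : qᵀ = q := by
    conv_rhs => rw [hq_eq, hα1, one_smul]
  -- orthogonality of τ forces a nonzero diagonal entry of q
  have hqsym : q 1 0 = q 0 1 := by
    have := congrFun (congrFun hqT 0) 1
    exact this
  have hdiag : q 0 0 ≠ 0 ∨ q 1 1 ≠ 0 := by
    by_contra hcon
    push_neg at hcon
    obtain ⟨h00, h11⟩ := hcon
    apply τorth
    set y : M₂ := Matrix.single 0 1 (q 0 1) with hy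
    have hyq : yᵀ + y = q := by
      ext i j
      rcases hj2 i with rfl | rfl <;> rcases hj2 j with rfl | rfl <;>
        simp [hy, transpose_apply, h00, h11, hqsym]
    have hτx : τ (y * q⁻¹) = yᵀ * q⁻¹ := by
      rw [τform, transpose_mul, transpose_nonsing_inv, hqT, ← mul_assoc,
        hqq', one_mul]
    refine ⟨y * q⁻¹, ?_⟩
    show τ (y * q⁻¹) - y * q⁻¹ = 1
    rw [hτx, char2_sub_eq_add (F := F), ← add_mul, hyq, hqq']
  -- diagonal entries of q⁻¹
  have hw00 : q⁻¹ 0 0 = q.det⁻¹ * q 1 1 := by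
    simp [Matrix.inv_def, Matrix.adjugate_fin_two, Ring.inverse_eq_inv']
  have hw11 : q⁻¹ 1 1 = q.det⁻¹ * q 0 0 := by
    simp [Matrix.inv_def, Matrix.adjugate_fin_two, Ring.inverse_eq_inv']
  obtain ⟨i₀, hγ⟩ : ∃ i₀ : Fin 2, q⁻¹ i₀ i₀ ≠ 0 := by
    rcases hdiag with h | h
    · exact ⟨1, by rw [hw11]; exact mul_ne_zero (inv_ne_zero hdetq) h⟩
    · exact ⟨0, by rw [hw00]; exact mul_ne_zero (inv_ne_zero hdetq) h⟩
  set v : Fin 2 → F := Pi.single i₀ 1 with hvdef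
  set z : Fin 2 → F := q⁻¹ *ᵥ v with hzdef
  set γ : F := q⁻¹ i₀ i₀ with hγdef
  have hzv : z ⬝ᵥ v = γ := by
    simp [hzdef, hvdef, hγdef, mulVec_single, dotProduct_single]
  have hqz : q *ᵥ z = v := by
    rw [hzdef, mulVec_mulVec, hqq', one_mulVec]
  set e : M₂ := γ⁻¹ • vecMulVec v z with hedef
  have he2 : e * e = e := by
    rw [hedef, smul_mul_assoc, mul_smul_comm, vmv_vmv, hzv, smul_smul, smul_smul]
    congr 1
    field_simp
  have hqe : q * eᵀ = e * q := by
    rw [hedef, transpose_smul, vmv_transpose, mul_smul_comm, mul_vmv, smul_mul_assoc,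
      vmv_mul, hqT, hqz]
  have hτe : τ e = e := by
    have h := Hτ e
    rw [hqe] at h
    have h2 := congrArg (fun m => m * q⁻¹) h
    simpa only [mul_assoc, hqq', mul_one] using h2
  have hev : e *ᵥ v = v := by
    rw [hedef, smul_mulVec, vmv_mulVec, hzv, smul_smul, inv_mul_cancel₀ hγ, one_smul]
  have hene : e ≠ 0 := by
    intro h
    rw [h, zero_mulVec] at hev
    have := congrFun hev i₀
    rw [hvdef] at this
    simp at this
  refine ⟨e, he2, hτe, hene, fun m => ⟨γ⁻¹ * ((mᵀ *ᵥ z) ⬝ᵥ v), ?_⟩⟩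
  rw [hedef, smul_mul_assoc, vmv_mul, smul_mul_assoc, mul_smul_comm, vmv_vmv,
    smul_smul, smul_smul, smul_smul]
  congr 1
  ring

end Tau


section KeyLemma
variable {F : Type*} [Field F] [CharP F 2] {ι : Type*} [Fintype ι] [DecidableEq ι]


private lemma dot_self_sq (v : ι → F) : v ⬝ᵥ v = (∑ i, v i) ^ 2 := by
  rw [sum_pow_char (p := 2)]
  simp [dotProduct, sq]

private lemma char2_one_add_one : (1 : F) + 1 = 0 := by
  have := CharP.cast_eq_zero F 2
  push_cast at this
  linear_combination this

private lemma char2_orthonormal_basis :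
    ∀ (r : ℕ) (U : Submodule F (ι → F)), Module.finrank F U = r →
    (∀ u ∈ U, (∀ v ∈ U, u ⬝ᵥ v = 0) → u = 0) →
    (∃ u ∈ U, u ⬝ᵥ u ≠ 0) →
    ∃ b : Fin r → (ι → F), (∀ i, b i ∈ U) ∧
      Submodule.span F (Set.range b) = U ∧
      (∀ i j, b i ⬝ᵥ b j = if i = j then 1 else 0) := by
  intro r
  induction r using Nat.strong_induction_on with
  | _ r IH =>
  intro U hrank hnd hna
  obtain ⟨u, huU, huu⟩ := hna
  -- normalize u
  have ht : (∑ i, u i) ≠ 0 := by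
    intro h; rw [dot_self_sq, h] at huu; simp at huu
  set e₀ : ι → F := (∑ i, u i)⁻¹ • u with he_def
  have he₀U : e₀ ∈ U := U.smul_mem _ huU
  have he₀e₀ : e₀ ⬝ᵥ e₀ = 1 := by
    rw [he_def, smul_dotProduct, dotProduct_smul, dot_self_sq, smul_eq_mul, smul_eq_mul]
    field_simp [sq]
  clear ht huu huU he_def
  -- construction of the orthogonal complement of a unit vector
  have Wdef : ∀ e : ι → F, e ∈ U → e ⬝ᵥ e = 1 →
      ∃ W : Submodule F (ι → F), (∀ x, x ∈ W ↔ x ∈ U ∧ e ⬝ᵥ x = 0) ∧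
        Module.finrank F W + 1 = r := by
    intro e heU hee
    let ψ : U →ₗ[F] F :=
      { toFun := fun x => e ⬝ᵥ (x : ι → F)
        map_add' := by intros; simp [dotProduct_add]
        map_smul' := by intros; simp [dotProduct_smul] }
    have hψsurj : LinearMap.range ψ = ⊤ := by
      rw [LinearMap.range_eq_top]
      intro c
      refine ⟨c • ⟨e, heU⟩, ?_⟩
      show e ⬝ᵥ (c • e) = c
      rw [dotProduct_smul, hee, smul_eq_mul, mul_one]
    have hrk := LinearMap.finrank_range_add_finrank_ker ψ
    rw [hψsurj, finrank_top, Module.finrank_self] at hrk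
    refine ⟨(LinearMap.ker ψ).map U.subtype, ?_, ?_⟩
    · intro x
      constructor
      · rintro ⟨⟨y, hyU⟩, hy, rfl⟩
        exact ⟨hyU, hy⟩
      · rintro ⟨hxU, hx⟩
        exact ⟨⟨x, hxU⟩, hx, rfl⟩
    · rw [Submodule.finrank_map_subtype_eq, hrank] at *
      omega
  -- decomposition u = (e⬝u)e + w
  have hdecomp : ∀ (e : ι → F), e ⬝ᵥ e = 1 → ∀ x ∈ U, x - (e ⬝ᵥ x) • e ∈ U → True := fun _ _ _ _ _ => trivial
  -- nondegeneracy of W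
  have Wnd : ∀ e : ι → F, e ∈ U → e ⬝ᵥ e = 1 →
      ∀ W : Submodule F (ι → F), (∀ x, x ∈ W ↔ x ∈ U ∧ e ⬝ᵥ x = 0) →
      (∀ w ∈ W, (∀ v ∈ W, w ⬝ᵥ v = 0) → w = 0) := by
    intro e heU hee W hW w hwW hworth
    obtain ⟨hwU, hwe⟩ := (hW w).1 hwW
    refine hnd w hwU ?_
    intro v hvU
    have hv' : v - (e ⬝ᵥ v) • e ∈ W := by
      rw [hW]
      refine ⟨U.sub_mem hvU (U.smul_mem _ heU), ?_⟩
      rw [dotProduct_sub, dotProduct_smul, hee, smul_eq_mul, mul_one, sub_self]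
    have h1 := hworth _ hv'
    rw [dotProduct_sub, dotProduct_smul, smul_eq_mul] at h1
    have hwe' : w ⬝ᵥ e = 0 := by rw [dotProduct_comm]; exact hwe
    rw [hwe', mul_zero, sub_zero] at h1
    exact h1
  -- the main finishing step
  have finish : ∀ e : ι → F, e ∈ U → e ⬝ᵥ e = 1 →
      ∀ W : Submodule F (ι → F), (∀ x, x ∈ W ↔ x ∈ U ∧ e ⬝ᵥ x = 0) →
      Module.finrank F W + 1 = r →
      (W = ⊥ ∨ ∃ w ∈ W, w ⬝ᵥ w ≠ 0) →
      ∃ b : Fin r → (ι → F), (∀ i, b i ∈ U) ∧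
        Submodule.span F (Set.range b) = U ∧
        (∀ i j, b i ⬝ᵥ b j = if i = j then 1 else 0) := by
    intro e heU hee W hW hWrank hcase
    have hUspan : U = Submodule.span F {e} ⊔ W := by
      apply le_antisymm
      · intro x hxU
        have h1 : (e ⬝ᵥ x) • e ∈ Submodule.span F {e} :=
          Submodule.smul_mem _ _ (Submodule.mem_span_singleton_self e)
        have h2 : x - (e ⬝ᵥ x) • e ∈ W := by
          rw [hW]
          refine ⟨U.sub_mem hxU (U.smul_mem _ heU), ?_⟩
          rw [dotProduct_sub, dotProduct_smul, hee, smul_eq_mul, mul_one, sub_self]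
        have := Submodule.add_mem_sup h1 h2
        simpa using this
      · refine sup_le ?_ ?_
        · rw [Submodule.span_le, Set.singleton_subset_iff]; exact heU
        · intro x hx; exact ((hW x).1 hx).1
    rcases hcase with hbot | ⟨w, hwW, hww⟩
    · -- W = ⊥, r = 1
      subst hbot
      rw [finrank_bot] at hWrank
      obtain rfl : r = 1 := by omega
      refine ⟨fun _ => e, fun _ => heU, ?_, ?_⟩
      · rw [Set.range_const, hUspan]
        simp
      · intro i j
        rw [Subsingleton.elim i j, if_pos rfl, hee]
    · -- W nonalternating: apply IH
      have hlt : Module.finrank F W < r := by omega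
      have hWna : ∃ w ∈ W, w ⬝ᵥ w ≠ 0 := ⟨w, hwW, hww⟩
      obtain ⟨b', hb'W, hb'span, hb'on⟩ :=
        IH (Module.finrank F W) hlt W rfl (Wnd e heU hee W hW) hWna
      subst hWrank
      refine ⟨Fin.cons e b', ?_, ?_, ?_⟩
      · intro i
        refine Fin.cases ?_ ?_ i
        · exact heU
        · intro k; exact ((hW _).1 (hb'W k)).1
      · rw [Fin.range_cons, Submodule.span_insert, hb'span, hUspan]
      · intro i j
        refine Fin.cases ?_ ?_ i <;> [skip; intro i'] <;> refine Fin.cases ?_ ?_ j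
        · rw [Fin.cons_zero, hee, if_pos rfl]
        · intro j'
          rw [Fin.cons_zero, Fin.cons_succ, ((hW _).1 (hb'W j')).2,
            if_neg (Fin.succ_ne_zero j').symm]
        · rw [Fin.cons_zero, Fin.cons_succ, dotProduct_comm, ((hW _).1 (hb'W i')).2,
            if_neg (Fin.succ_ne_zero i')]
        · intro j'
          rw [Fin.cons_succ, Fin.cons_succ, hb'on]
          simp [Fin.succ_inj]
  -- now the case analysis
  obtain ⟨W, hW, hWrank⟩ := Wdef e₀ he₀U he₀e₀
  by_cases hna' : ∃ w ∈ W, w ⬝ᵥ w ≠ 0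
  · exact finish e₀ he₀U he₀e₀ W hW hWrank (Or.inr hna')
  push_neg at hna'
  by_cases hbot : W = ⊥
  · exact finish e₀ he₀U he₀e₀ W hW hWrank (Or.inl hbot)
  · -- W alternating and nonzero: hyperbolic trick
    obtain ⟨w₁, hw₁W, hw₁0⟩ := Submodule.exists_mem_ne_zero_of_ne_bot hbot
    have hw₁U : w₁ ∈ U := ((hW w₁).1 hw₁W).1
    have hex : ∃ v ∈ W, w₁ ⬝ᵥ v ≠ 0 := by
      by_contra hc
      push_neg at hc
      exact hw₁0 (Wnd e₀ he₀U he₀e₀ W hW w₁ hw₁W hc)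
    obtain ⟨v, hvW, hv0⟩ := hex
    set w₂ : ι → F := (w₁ ⬝ᵥ v)⁻¹ • v with hw₂def
    have hw₂W : w₂ ∈ W := W.smul_mem _ hvW
    have hw₁w₂ : w₁ ⬝ᵥ w₂ = 1 := by
      rw [hw₂def, dotProduct_smul, smul_eq_mul, inv_mul_cancel₀ hv0]
    have he₀w₁ : e₀ ⬝ᵥ w₁ = 0 := ((hW w₁).1 hw₁W).2
    have he₀w₂ : e₀ ⬝ᵥ w₂ = 0 := ((hW w₂).1 hw₂W).2
    set e₁ : ι → F := e₀ + w₁ with he₁def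
    set e₂ : ι → F := e₀ + w₂ with he₂def
    have he₁U : e₁ ∈ U := U.add_mem he₀U hw₁U
    have he₂U : e₂ ∈ U := U.add_mem he₀U ((hW w₂).1 hw₂W).1
    have he₁e₁ : e₁ ⬝ᵥ e₁ = 1 := by
      rw [he₁def, dotProduct_add, add_dotProduct, add_dotProduct, he₀e₀,
        hna' w₁ hw₁W, dotProduct_comm w₁ e₀, he₀w₁]
      ring
    have he₂e₂ : e₂ ⬝ᵥ e₂ = 1 := by
      rw [he₂def, dotProduct_add, add_dotProduct, add_dotProduct, he₀e₀,
        hna' w₂ hw₂W, dotProduct_comm w₂ e₀, he₀w₂]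
      ring
    have he₁e₂ : e₁ ⬝ᵥ e₂ = 0 := by
      rw [he₁def, he₂def, dotProduct_add, add_dotProduct, add_dotProduct, he₀e₀,
        he₀w₂, dotProduct_comm w₁ e₀, he₀w₁, hw₁w₂]
      rw [add_zero, zero_add, char2_one_add_one]
    obtain ⟨W₁, hW₁, hW₁rank⟩ := Wdef e₁ he₁U he₁e₁
    refine finish e₁ he₁U he₁e₁ W₁ hW₁ hW₁rank (Or.inr ⟨e₂, ?_, ?_⟩)
    · rw [hW₁]; exact ⟨he₂U, he₁e₂⟩
    · rw [he₂e₂]; exact one_ne_zero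

end KeyLemma

section MoreHelpers
variable {F : Type*} [CommRing F] {ι : Type*} [Fintype ι]

lemma dot_sum {κ : Type*} (v : ι → F) (s : Finset κ) (g : κ → ι → F) :
    v ⬝ᵥ (∑ k ∈ s, g k) = ∑ k ∈ s, v ⬝ᵥ g k := by
  simp only [dotProduct, Finset.sum_apply, Finset.mul_sum]
  rw [Finset.sum_comm]

lemma mulVec_sum' {κ : Type*} (M : Matrix ι ι F) (s : Finset κ) (g : κ → ι → F) :
    M *ᵥ (∑ k ∈ s, g k) = ∑ k ∈ s, M *ᵥ g k := by
  calc M *ᵥ (∑ k ∈ s, g k) = M.mulVecLin (∑ k ∈ s, g k) := (M.mulVecLin_apply _).symm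
  _ = ∑ k ∈ s, M.mulVecLin (g k) := map_sum _ _ _
  _ = ∑ k ∈ s, M *ᵥ g k := by simp only [Matrix.mulVecLin_apply]

lemma sum_mulVec' {κ : Type*} (s : Finset κ) (g : κ → Matrix ι ι F) (v : ι → F) :
    (∑ k ∈ s, g k) *ᵥ v = ∑ k ∈ s, g k *ᵥ v := by
  ext i
  simp only [mulVec, dotProduct, Finset.sum_apply, Matrix.sum_apply, Finset.sum_mul]
  rw [Finset.sum_comm]

end MoreHelpers

/-- If `(A ⊗ M₂(F), σ ⊗ τ) ≅ (M_{2ⁿ}(F), t)` for a central simple algebra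
with orthogonal involution `(A,σ)` and an orthogonal involution `τ` on `M₂(F)`, then
`(A,σ) ≅ (M_{2^{n-1}}(F), t)`. -/
theorem statement_15 {F A : Type*} [Field F] [CharP F 2] [Ring A] [Algebra F A]
    [FiniteDimensional F A]
    (hcentral : ∀ z : A, (∀ y : A, z * y = y * z) → ∃ α : F, z = algebraMap F A α)
    (hsimple : IsSimpleRing A)
    (σ : A →ₗ[F] A) (hσ : IsOrthInvolution F σ)
    (τ : Matrix (Fin 2) (Fin 2) F →ₗ[F] Matrix (Fin 2) (Fin 2) F)
    (hτ : IsOrthInvolution F τ)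
    (n : ℕ)
    (f : (A ⊗[F] Matrix (Fin 2) (Fin 2) F) ≃ₐ[F] Matrix (Fin (2 ^ n)) (Fin (2 ^ n)) F)
    (hf : ∀ z, f (TensorProduct.map σ τ z) = (f z)ᵀ) :
    ∃ g : A ≃ₐ[F] Matrix (Fin (2 ^ (n - 1))) (Fin (2 ^ (n - 1))) F,
      ∀ x, g (σ x) = (g x)ᵀ := by
  classical
  obtain ⟨⟨σmul, σinv⟩, σorth⟩ := hσ
  have σ1 : σ 1 = 1 := inv_one_eq_one σ ⟨σmul, σinv⟩
  obtain ⟨e, hee, hτe, hene, hcorner⟩ := exists_symm_idem τ hτ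
  -- injectivity of a ↦ a ⊗ e
  have htinj : ∀ a : A, a ⊗ₜ[F] e = 0 → a = 0 := by
    obtain ⟨i₁, j₁, hij⟩ : ∃ i j, e i j ≠ 0 := by
      by_contra hc
      push_neg at hc
      exact hene (by ext i j; exact hc i j)
    intro a ha
    let φ : Matrix (Fin 2) (Fin 2) F →ₗ[F] F :=
      { toFun := fun m => (e i₁ j₁)⁻¹ * m i₁ j₁
        map_add' := by intros; simp [Matrix.add_apply]; ring
        map_smul' := by intros; simp [Matrix.smul_apply]; ring }
    have hφe : φ e = 1 := inv_mul_cancel₀ hij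
    have h := congrArg (fun z => (TensorProduct.rid F A) ((LinearMap.lTensor A φ) z)) ha
    simp only [LinearMap.lTensor_tmul, hφe, TensorProduct.rid_tmul, one_smul, map_zero] at h
    exact h
  -- the corner of the tensor algebra
  have hcornerT : ∀ z : A ⊗[F] Matrix (Fin 2) (Fin 2) F,
      ∃ a : A, (1 ⊗ₜ[F] e) * z * (1 ⊗ₜ[F] e) = a ⊗ₜ[F] e := by
    intro z
    induction z using TensorProduct.induction_on with
    | zero => exact ⟨0, by simp⟩
    | tmul b m =>
        obtain ⟨s, hs⟩ := hcorner m
        refine ⟨s • b, ?_⟩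
        rw [Algebra.TensorProduct.tmul_mul_tmul, Algebra.TensorProduct.tmul_mul_tmul,
          one_mul, mul_one, hs, TensorProduct.tmul_smul, TensorProduct.smul_tmul']
    | add z₁ z₂ h₁ h₂ =>
        obtain ⟨a₁, ha₁⟩ := h₁
        obtain ⟨a₂, ha₂⟩ := h₂
        exact ⟨a₁ + a₂, by rw [mul_add, add_mul, ha₁, ha₂, TensorProduct.add_tmul]⟩
  have hsand : ∀ a : A, (1 ⊗ₜ[F] e) * (a ⊗ₜ[F] e) * (1 ⊗ₜ[F] e) = a ⊗ₜ[F] e := by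
    intro a
    rw [Algebra.TensorProduct.tmul_mul_tmul, Algebra.TensorProduct.tmul_mul_tmul,
      one_mul, mul_one, hee, hee]
  -- the projection p and the map Φ
  set p : Matrix (Fin (2 ^ n)) (Fin (2 ^ n)) F := f (1 ⊗ₜ[F] e) with hp
  have hΦσ : ∀ a : A, f (σ a ⊗ₜ[F] e) = (f (a ⊗ₜ[F] e))ᵀ := by
    intro a
    have h := hf (a ⊗ₜ[F] e)
    rw [TensorProduct.map_tmul, hτe] at h
    exact h
  have hpT : pᵀ = p := by
    have h := hΦσ 1
    rw [σ1, ← hp] at h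
    exact h.symm
  have hpp : p * p = p := by
    rw [hp, ← _root_.map_mul, Algebra.TensorProduct.tmul_mul_tmul, one_mul, hee]
  have hΦmul : ∀ a b : A, f (a ⊗ₜ[F] e) * f (b ⊗ₜ[F] e) = f ((a * b) ⊗ₜ[F] e) := by
    intro a b
    rw [← _root_.map_mul, Algebra.TensorProduct.tmul_mul_tmul, hee]
  have hΦp : ∀ a : A, p * f (a ⊗ₜ[F] e) * p = f (a ⊗ₜ[F] e) := by
    intro a
    rw [hp, ← _root_.map_mul, ← _root_.map_mul, hsand]
  have hpΦ : ∀ a : A, p * f (a ⊗ₜ[F] e) = f (a ⊗ₜ[F] e) := by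
    intro a
    calc p * f (a ⊗ₜ[F] e) = p * (p * f (a ⊗ₜ[F] e) * p) := by rw [hΦp]
    _ = (p * p) * f (a ⊗ₜ[F] e) * p := by simp only [← mul_assoc]
    _ = p * f (a ⊗ₜ[F] e) * p := by rw [hpp]
    _ = f (a ⊗ₜ[F] e) := hΦp a
  have hΦpR : ∀ a : A, f (a ⊗ₜ[F] e) * p = f (a ⊗ₜ[F] e) := by
    intro a
    calc f (a ⊗ₜ[F] e) * p = (p * f (a ⊗ₜ[F] e) * p) * p := by rw [hΦp]
    _ = p * f (a ⊗ₜ[F] e) * (p * p) := by simp only [mul_assoc]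
    _ = p * f (a ⊗ₜ[F] e) * p := by rw [hpp]
    _ = f (a ⊗ₜ[F] e) := hΦp a
  -- the subspace U
  set U : Submodule F (Fin (2 ^ n) → F) := LinearMap.range p.mulVecLin with hU
  have hmemU : ∀ x, x ∈ U ↔ p *ᵥ x = x := by
    intro x
    constructor
    · rintro ⟨y, rfl⟩
      show p *ᵥ (p *ᵥ y) = p *ᵥ y
      rw [mulVec_mulVec, hpp]
    · intro h
      exact ⟨x, h⟩
  have hpx_mem : ∀ x, p *ᵥ x ∈ U := fun x => ⟨x, rfl⟩
  have hdotp : ∀ (u x : Fin (2 ^ n) → F), p *ᵥ u = u → u ⬝ᵥ (p *ᵥ x) = u ⬝ᵥ x := by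
    intro u x hu
    rw [dotProduct_mulVec]
    congr 1
    calc u ᵥ* p = u ᵥ* (pᵀ)ᵀ := by rw [transpose_transpose]
    _ = pᵀ *ᵥ u := vecMul_transpose _ _
    _ = u := by rw [hpT, hu]
  have hnd : ∀ u ∈ U, (∀ v' ∈ U, u ⬝ᵥ v' = 0) → u = 0 := by
    intro u huU hall
    have hu := (hmemU u).1 huU
    have hzero : ∀ x, u ⬝ᵥ x = 0 := by
      intro x
      have h1 := hall (p *ᵥ x) (hpx_mem x)
      rwa [hdotp u x hu] at h1
    funext i
    have := hzero (Pi.single i 1)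
    rwa [dotProduct_single, mul_one] at this
  -- orthogonality of σ means U is not alternating
  have hna : ∃ u ∈ U, u ⬝ᵥ u ≠ 0 := by
    by_contra hc
    push_neg at hc
    have hdiagp : ∀ i, p i i = 0 := by
      intro i
      have hu : p *ᵥ (p *ᵥ Pi.single i 1) = p *ᵥ Pi.single i 1 := by
        rw [mulVec_mulVec, hpp]
      have h := hc (p *ᵥ Pi.single i 1) (hpx_mem _)
      rw [hdotp _ _ hu, dotProduct_single, mul_one, mulVec_single] at h
      simpa using h
    have hpsym : ∀ i j, p j i = p i j := by
      intro i j
      exact congrFun (congrFun hpT i) j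
    set y : Matrix (Fin (2 ^ n)) (Fin (2 ^ n)) F :=
      Matrix.of (fun i j => if i < j then p i j else 0) with hy
    have hyp : yᵀ + y = p := by
      ext i j
      show y j i + y i j = p i j
      rcases lt_trichotomy i j with h | h | h
      · have h' : ¬ (j < i) := not_lt_of_gt h
        simp [hy, h, h']
      · subst h
        simp [hy, lt_irrefl, hdiagp]
      · have h' : ¬ (i < j) := not_lt_of_gt h
        simp [hy, h, h', hpsym]
    obtain ⟨a, ha⟩ := hcornerT (f.symm y)
    have hfa : f (a ⊗ₜ[F] e) = p * y * p := by
      rw [← ha, _root_.map_mul, _root_.map_mul, AlgEquiv.apply_symm_apply, ← hp]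
    apply σorth
    refine ⟨a, ?_⟩
    show σ a - a = 1
    have h1 : f ((σ a + a) ⊗ₜ[F] e) = p := by
      rw [TensorProduct.add_tmul, map_add, hΦσ a, hfa]
      calc (p * y * p)ᵀ + p * y * p
          = p * (yᵀ + y) * p := by
            rw [transpose_mul, transpose_mul, hpT]
            noncomm_ring
        _ = p := by rw [hyp, hpp, hpp]
    have h2 : (σ a + a) ⊗ₜ[F] e = 1 ⊗ₜ[F] e := f.injective (by rw [h1, hp])
    have h3 : σ a + a = 1 := by
      have h4 : ((σ a + a) - 1) ⊗ₜ[F] e = 0 := by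
        rw [TensorProduct.sub_tmul, h2, sub_self]
      have h5 := htinj _ h4
      have := sub_eq_zero.1 h5
      exact this
    rw [char2_sub_eq_add (F := F), h3]
  -- get the orthonormal basis
  set r := Module.finrank F U with hr
  obtain ⟨b, hbU, hbspan, hbon⟩ :=
    char2_orthonormal_basis r U hr.symm hnd hna
  have hpb : ∀ j, p *ᵥ b j = b j := fun j => (hmemU _).1 (hbU j)
  -- expansion in the orthonormal basis
  have hexp : ∀ u ∈ U, (∑ k : Fin r, (b k ⬝ᵥ u) • b k) = u := by
    intro u huU
    rw [← hbspan] at huU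
    obtain ⟨c, hc⟩ := (Submodule.mem_span_range_iff_exists_fun F).1 huU
    have hck : ∀ k, b k ⬝ᵥ u = c k := by
      intro k
      rw [← hc, dot_sum]
      have : ∀ i : Fin r, b k ⬝ᵥ (c i • b i) = if k = i then c i else 0 := by
        intro i
        rw [dotProduct_smul, hbon, smul_eq_mul]
        by_cases h : k = i <;> simp [h]
      rw [Finset.sum_congr rfl fun i _ => this i]
      simp
    calc (∑ k : Fin r, (b k ⬝ᵥ u) • b k) = ∑ k : Fin r, c k • b k := by
          exact Finset.sum_congr rfl fun k _ => by rw [hck]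
    _ = u := hc
  have hΦv_mem : ∀ (a : A) (j : Fin r), f (a ⊗ₜ[F] e) *ᵥ b j ∈ U := by
    intro a j
    refine (hmemU _).2 ?_
    rw [mulVec_mulVec, hpΦ]
  -- the algebra homomorphism g₁
  have hg0_one : (Matrix.of fun i j => b i ⬝ᵥ (f ((1 : A) ⊗ₜ[F] e) *ᵥ b j))
      = (1 : Matrix (Fin r) (Fin r) F) := by
    ext i j
    show b i ⬝ᵥ (f ((1 : A) ⊗ₜ[F] e) *ᵥ b j) = _
    rw [← hp, hpb, hbon, Matrix.one_apply]
  have hg0_mul : ∀ a a' : A, (Matrix.of fun i j => b i ⬝ᵥ (f ((a * a') ⊗ₜ[F] e) *ᵥ b j))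
      = (Matrix.of fun i j => b i ⬝ᵥ (f (a ⊗ₜ[F] e) *ᵥ b j))
        * (Matrix.of fun i j => b i ⬝ᵥ (f (a' ⊗ₜ[F] e) *ᵥ b j)) := by
    intro a a'
    ext i j
    rw [Matrix.mul_apply]
    show b i ⬝ᵥ (f ((a * a') ⊗ₜ[F] e) *ᵥ b j) = _
    rw [← hΦmul, ← mulVec_mulVec]
    conv_lhs => rw [← hexp (f (a' ⊗ₜ[F] e) *ᵥ b j) (hΦv_mem a' j)]
    rw [mulVec_sum', dot_sum]
    refine Finset.sum_congr rfl fun k _ => ?_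
    rw [mulVec_smul, dotProduct_smul, smul_eq_mul]
    simp only [Matrix.of_apply]
    ring
  have hg0_add : ∀ a a' : A, (Matrix.of fun i j => b i ⬝ᵥ (f ((a + a') ⊗ₜ[F] e) *ᵥ b j))
      = (Matrix.of fun i j => b i ⬝ᵥ (f (a ⊗ₜ[F] e) *ᵥ b j))
        + (Matrix.of fun i j => b i ⬝ᵥ (f (a' ⊗ₜ[F] e) *ᵥ b j)) := by
    intro a a'
    ext i j
    show b i ⬝ᵥ (f ((a + a') ⊗ₜ[F] e) *ᵥ b j) = _
    rw [TensorProduct.add_tmul, map_add, Matrix.add_mulVec, dotProduct_add]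
    rfl
  have hg0_smul : ∀ (c : F) (a : A),
      (Matrix.of fun i j => b i ⬝ᵥ (f ((c • a) ⊗ₜ[F] e) *ᵥ b j))
      = c • (Matrix.of fun i j => b i ⬝ᵥ (f (a ⊗ₜ[F] e) *ᵥ b j)) := by
    intro c a
    ext i j
    show b i ⬝ᵥ (f ((c • a) ⊗ₜ[F] e) *ᵥ b j) = c • (b i ⬝ᵥ (f (a ⊗ₜ[F] e) *ᵥ b j))
    rw [← TensorProduct.smul_tmul', _root_.map_smul, smul_mulVec, dotProduct_smul]
  set g1 : A →ₐ[F] Matrix (Fin r) (Fin r) F :=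
    { toFun := fun a => Matrix.of fun i j => b i ⬝ᵥ (f (a ⊗ₜ[F] e) *ᵥ b j)
      map_one' := hg0_one
      map_mul' := hg0_mul
      map_zero' := by
        ext i j
        show b i ⬝ᵥ (f ((0 : A) ⊗ₜ[F] e) *ᵥ b j) = 0
        rw [TensorProduct.zero_tmul, map_zero, zero_mulVec, dotProduct_zero]
      map_add' := hg0_add
      commutes' := by
        intro c
        show (Matrix.of fun i j => b i ⬝ᵥ (f ((algebraMap F A c) ⊗ₜ[F] e) *ᵥ b j)) = _
        rw [Algebra.algebraMap_eq_smul_one, hg0_smul, hg0_one,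
          ← Algebra.algebraMap_eq_smul_one] } with hg1
  have hg1app : ∀ (a : A) (i j : Fin r), g1 a i j = b i ⬝ᵥ (f (a ⊗ₜ[F] e) *ᵥ b j) :=
    fun a i j => rfl
  -- injectivity
  have hg1inj : Function.Injective g1 := by
    intro a a' h
    have hz : g1 (a - a') = 0 := by rw [_root_.map_sub, h, sub_self]
    set d := a - a' with hd
    have hcol : ∀ j, f (d ⊗ₜ[F] e) *ᵥ b j = 0 := by
      intro j
      rw [← hexp _ (hΦv_mem d j)]
      apply Finset.sum_eq_zero
      intro k _
      have hk : b k ⬝ᵥ (f (d ⊗ₜ[F] e) *ᵥ b j) = 0 := by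
        have := congrFun (congrFun hz k) j
        exact this
      rw [hk, zero_smul]
    have hallv : ∀ x, f (d ⊗ₜ[F] e) *ᵥ x = 0 := by
      intro x
      have h1 : f (d ⊗ₜ[F] e) *ᵥ x = f (d ⊗ₜ[F] e) *ᵥ (p *ᵥ x) := by
        rw [mulVec_mulVec, hΦpR]
      rw [h1, ← hexp _ (hpx_mem x), mulVec_sum']
      apply Finset.sum_eq_zero
      intro k _
      rw [mulVec_smul, hcol, smul_zero]
    have hΦd0 : f (d ⊗ₜ[F] e) = 0 := by
      ext i j
      have := congrFun (hallv (Pi.single j 1)) i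
      rw [mulVec_single] at this
      simpa using this
    have h4 : d ⊗ₜ[F] e = 0 := f.injective (by rw [hΦd0, map_zero])
    have h5 := htinj _ h4
    exact sub_eq_zero.1 h5
  -- surjectivity
  have hg1surj : Function.Surjective g1 := by
    intro M
    set X : Matrix (Fin (2 ^ n)) (Fin (2 ^ n)) F :=
      ∑ k : Fin r, ∑ l : Fin r, M k l • vecMulVec (b k) (b l) with hX
    have hpXp : p * X * p = X := by
      rw [hX, Finset.mul_sum, Finset.sum_mul]
      refine Finset.sum_congr rfl fun k _ => ?_
      rw [Finset.mul_sum, Finset.sum_mul]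
      refine Finset.sum_congr rfl fun l _ => ?_
      rw [mul_smul_comm, smul_mul_assoc, mul_vmv, vmv_mul, hpb, hpT, hpb]
    obtain ⟨a, ha⟩ := hcornerT (f.symm X)
    have hfa : f (a ⊗ₜ[F] e) = X := by
      rw [← ha, _root_.map_mul, _root_.map_mul, AlgEquiv.apply_symm_apply, ← hp, hpXp]
    refine ⟨a, ?_⟩
    ext i j
    rw [hg1app, hfa, hX, sum_mulVec', dot_sum]
    have hterm : ∀ k l : Fin r,
        b i ⬝ᵥ ((M k l • vecMulVec (b k) (b l)) *ᵥ b j)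
          = M k l * ((if l = j then (1 : F) else 0) * (if i = k then 1 else 0)) := by
      intro k l
      rw [smul_mulVec, vmv_mulVec, dotProduct_smul, dotProduct_smul, hbon, hbon,
        smul_eq_mul, smul_eq_mul]
    calc ∑ k : Fin r, b i ⬝ᵥ ((∑ l : Fin r, M k l • vecMulVec (b k) (b l)) *ᵥ b j)
        = ∑ k : Fin r, ∑ l : Fin r,
            M k l * ((if l = j then (1 : F) else 0) * (if i = k then 1 else 0)) := by
          refine Finset.sum_congr rfl fun k _ => ?_
          rw [sum_mulVec', dot_sum]
          exact Finset.sum_congr rfl fun l _ => hterm k l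
    _ = M i j := by
          simp [mul_ite, ite_mul, Finset.sum_ite_eq', Finset.sum_ite_eq]
  -- assemble the equivalence
  set g2 : A ≃ₐ[F] Matrix (Fin r) (Fin r) F :=
    AlgEquiv.ofBijective g1 ⟨hg1inj, hg1surj⟩ with hg2
  have hg2app : ∀ a, g2 a = g1 a := fun a => rfl
  have hg2σ : ∀ x : A, g2 (σ x) = (g2 x)ᵀ := by
    intro x
    ext i j
    rw [hg2app, hg2app, Matrix.transpose_apply, hg1app, hg1app, hΦσ]
    rw [mulVec_transpose, dotProduct_mulVec, dotProduct_comm]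
  -- dimension count
  have hdimA : Module.finrank F A = r * r := by
    rw [g2.toLinearEquiv.finrank_eq, Module.finrank_matrix]
    simp
  have hdimT : Module.finrank F (A ⊗[F] Matrix (Fin 2) (Fin 2) F)
      = Module.finrank F A * 4 := by
    rw [Module.finrank_tensorProduct, Module.finrank_matrix]
    simp
  have hdimN : Module.finrank F (A ⊗[F] Matrix (Fin 2) (Fin 2) F) = 2 ^ n * 2 ^ n := by
    rw [f.toLinearEquiv.finrank_eq, Module.finrank_matrix]
    simp
  have key : r * r * 4 = 2 ^ n * 2 ^ n := by
    rw [← hdimA, ← hdimT, hdimN]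
  have hn0 : n ≠ 0 := by
    rintro rfl
    simp only [pow_zero, one_mul, mul_one] at key
    rcases Nat.eq_zero_or_pos r with h | h
    · rw [h] at key
      omega
    · nlinarith [key]
  obtain ⟨m, rfl⟩ : ∃ m, n = m + 1 :=
    ⟨n - 1, (Nat.succ_pred_eq_of_pos (Nat.pos_of_ne_zero hn0)).symm⟩
  have hrval : r = 2 ^ (m + 1 - 1) := by
    have hsplit : (2 : ℕ) ^ (m + 1) * 2 ^ (m + 1) = 2 ^ m * 2 ^ m * 4 := by
      rw [pow_succ]
      ring
    rw [hsplit] at key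
    have h2 : r * r = 2 ^ m * 2 ^ m :=
      Nat.eq_of_mul_eq_mul_right (by norm_num) key
    have h3 : r ^ 2 = (2 ^ m) ^ 2 := by rw [pow_two, pow_two, h2]
    have h4 : r = 2 ^ m := Nat.pow_left_injective (by norm_num) h3
    simpa using h4
  refine ⟨g2.trans (Matrix.reindexAlgEquiv F F (finCongr hrval)), ?_⟩
  intro x
  simp only [AlgEquiv.trans_apply, Matrix.reindexAlgEquiv_apply, Matrix.reindex_apply]
  rw [hg2σ, Matrix.transpose_submatrix]
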